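/- Let g : [0,1]² → ℝ be nonnegative, continuous, and non-decreasing in each coordinate, and suppose (1−u₁)(1−u₂)∫₀^{u₁}∫₀^{u₂} g = u₁u₂ ∫_{u₁}^1∫_{u₂}^1 g for all u₁,u₂ ∈ (0,1). Then g is constant on [0,1]². -/

import Mathlib

open MeasureTheory Set intervalIntegral

/-- A continuous function that is nonnegative on `[a,b]` and has zero integral over `[a,b]`
vanishes on `[a,b]`. -/
lemma zero_of_intervalIntegral_zero {f : ℝ → ℝ} {a b : ℝ} (hab : a < b) (hf : Continuous f)
    (hnn : ∀ x ∈ Set.Icc a b, 0 ≤ f x) (hz : ∫ x in a..b, f x = 0) :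
    ∀ x ∈ Set.Icc a b, f x = 0 := by
  have hint : IntervalIntegrable f volume a b := hf.intervalIntegrable _ _
  have hae : 0 ≤ᵐ[volume.restrict (Ioc a b)] f :=
    (ae_restrict_iff' measurableSet_Ioc).2
      (Filter.Eventually.of_forall fun x hx => hnn x (Ioc_subset_Icc_self hx))
  have h0 : f =ᵐ[volume.restrict (Ioc a b)] 0 :=
    (integral_eq_zero_iff_of_le_of_nonneg_ae hab.le hae hint).1 hz
  have h0' : f =ᵐ[volume.restrict (Icc a b)] 0 := by
    rwa [Measure.restrict_congr_set Ioc_ae_eq_Icc] at h0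
  exact fun x hx =>
    Measure.eqOn_Icc_of_ae_eq volume hab.ne h0' hf.continuousOn continuousOn_const hx

/-- If `g : [0,1]² → ℝ` is nonnegative, continuous, non-decreasing in each
coordinate, and `(1−u₁)(1−u₂)∫₀^{u₁}∫₀^{u₂} g = u₁u₂∫_{u₁}^1∫_{u₂}^1 g` holds for all
`u₁, u₂ ∈ (0,1)`, then `g` is constant on `[0,1]²`. -/
theorem stmt_7 (g : ℝ → ℝ → ℝ)
    (hg_nonneg : ∀ p₁ ∈ Icc (0 : ℝ) 1, ∀ p₂ ∈ Icc (0 : ℝ) 1, 0 ≤ g p₁ p₂)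
    (hg_cont : ContinuousOn (fun p : ℝ × ℝ => g p.1 p.2) (Icc 0 1 ×ˢ Icc 0 1))
    (hg_mono : ∀ p₁ ∈ Icc (0 : ℝ) 1, ∀ p₂ ∈ Icc (0 : ℝ) 1,
      ∀ q₁ ∈ Icc (0 : ℝ) 1, ∀ q₂ ∈ Icc (0 : ℝ) 1,
      p₁ ≤ q₁ → p₂ ≤ q₂ → g p₁ p₂ ≤ g q₁ q₂)
    (hg_int : IntegrableOn (fun p : ℝ × ℝ => g p.1 p.2) (Icc 0 1 ×ˢ Icc 0 1))
    (heq : ∀ u₁ ∈ Ioo (0 : ℝ) 1, ∀ u₂ ∈ Ioo (0 : ℝ) 1,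
      (1 - u₁) * (1 - u₂) * (∫ p₁ in (0 : ℝ)..u₁, ∫ p₂ in (0 : ℝ)..u₂, g p₁ p₂)
        = u₁ * u₂ * (∫ p₁ in u₁..1, ∫ p₂ in u₂..1, g p₁ p₂)) :
    ∀ p₁ ∈ Icc (0 : ℝ) 1, ∀ p₂ ∈ Icc (0 : ℝ) 1,
      ∀ q₁ ∈ Icc (0 : ℝ) 1, ∀ q₂ ∈ Icc (0 : ℝ) 1, g p₁ p₂ = g q₁ q₂ := by
  -- clamp to `[0,1]`
  set π : ℝ → ℝ := fun x => max 0 (min 1 x) with hπ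
  have hπ_mem : ∀ x, π x ∈ Icc (0 : ℝ) 1 :=
    fun x => ⟨le_max_left _ _, max_le zero_le_one (min_le_left _ _)⟩
  have hπ_eq : ∀ x ∈ Icc (0 : ℝ) 1, π x = x := by
    intro x hx
    simp only [hπ]
    rw [min_eq_right hx.2, max_eq_right hx.1]
  have hπ_cont : Continuous π := continuous_const.max (continuous_const.min continuous_id)
  set G : ℝ → ℝ → ℝ := fun x y => g (π x) (π y) with hG
  have hG_cont : Continuous (Function.uncurry G) := by
    have : Function.uncurry G =
        (fun p : ℝ × ℝ => g p.1 p.2) ∘ fun p : ℝ × ℝ => (π p.1, π p.2) := rfl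
    rw [this]
    exact hg_cont.comp_continuous ((hπ_cont.comp continuous_fst).prodMk
      (hπ_cont.comp continuous_snd)) fun p => ⟨hπ_mem _, hπ_mem _⟩
  have hG_eq : ∀ x ∈ Icc (0 : ℝ) 1, ∀ y ∈ Icc (0 : ℝ) 1, G x y = g x y := by
    intro x hx y hy
    simp only [hG, hπ_eq x hx, hπ_eq y hy]
  have hG_cont_slice : ∀ x, Continuous fun y => G x y := fun x =>
    hG_cont.comp (Continuous.prodMk_right x)
  set c : ℝ := g (1/2) (1/2) with hc
  have half_mem : (1/2 : ℝ) ∈ Icc (0:ℝ) 1 := by norm_num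
  -- lower-region function and properties
  set F₀ : ℝ → ℝ := fun x => ∫ y in (0:ℝ)..(1/2), G x y with hF₀
  set F₁ : ℝ → ℝ := fun x => ∫ y in (1/2:ℝ)..1, G x y with hF₁
  have hF₀_cont : Continuous F₀ :=
    intervalIntegral.continuous_parametric_intervalIntegral_of_continuous' hG_cont 0 (1/2)
  have hF₁_cont : Continuous F₁ :=
    intervalIntegral.continuous_parametric_intervalIntegral_of_continuous' hG_cont (1/2) 1
  -- bounds on slices
  have hF₀_le : ∀ x ∈ Icc (0:ℝ) (1/2), F₀ x ≤ c / 2 := by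
    intro x hx
    have hx1 : x ∈ Icc (0:ℝ) 1 := ⟨hx.1, hx.2.trans (by norm_num)⟩
    have : F₀ x ≤ ∫ _ in (0:ℝ)..(1/2), c := by
      apply intervalIntegral.integral_mono_on (by norm_num)
        ((hG_cont_slice x).intervalIntegrable _ _) (intervalIntegrable_const)
      intro y hy
      have hy1 : y ∈ Icc (0:ℝ) 1 := ⟨hy.1, hy.2.trans (by norm_num)⟩
      rw [hG_eq x hx1 y hy1]
      exact hg_mono x hx1 y hy1 _ half_mem _ half_mem hx.2 hy.2
    simpa using this.trans_eq (by simp; ring)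
  have hF₁_ge : ∀ x ∈ Icc (1/2:ℝ) 1, c / 2 ≤ F₁ x := by
    intro x hx
    have hx1 : x ∈ Icc (0:ℝ) 1 := ⟨le_trans (by norm_num) hx.1, hx.2⟩
    have : (∫ _ in (1/2:ℝ)..1, c) ≤ F₁ x := by
      apply intervalIntegral.integral_mono_on (by norm_num) (intervalIntegrable_const)
        ((hG_cont_slice x).intervalIntegrable _ _)
      intro y hy
      have hy1 : y ∈ Icc (0:ℝ) 1 := ⟨le_trans (by norm_num) hy.1, hy.2⟩
      rw [hG_eq x hx1 y hy1]
      exact hg_mono _ half_mem _ half_mem x hx1 y hy1 hx.1 hy.1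
    refine le_trans (le_of_eq ?_) this
    simp; ring
  -- rewrite the hypothesis integrals in terms of G
  have hA : (∫ p₁ in (0:ℝ)..(1/2), ∫ p₂ in (0:ℝ)..(1/2), g p₁ p₂) = ∫ x in (0:ℝ)..(1/2), F₀ x := by
    apply intervalIntegral.integral_congr
    intro x hx
    rw [Set.uIcc_of_le (by norm_num : (0:ℝ) ≤ 1/2)] at hx
    have hx1 : x ∈ Icc (0:ℝ) 1 := ⟨hx.1, hx.2.trans (by norm_num)⟩
    apply intervalIntegral.integral_congr
    intro y hy
    rw [Set.uIcc_of_le (by norm_num : (0:ℝ) ≤ 1/2)] at hy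
    have hy1 : y ∈ Icc (0:ℝ) 1 := ⟨hy.1, hy.2.trans (by norm_num)⟩
    exact (hG_eq x hx1 y hy1).symm
  have hB : (∫ p₁ in (1/2:ℝ)..1, ∫ p₂ in (1/2:ℝ)..1, g p₁ p₂) = ∫ x in (1/2:ℝ)..1, F₁ x := by
    apply intervalIntegral.integral_congr
    intro x hx
    rw [Set.uIcc_of_le (by norm_num : (1/2:ℝ) ≤ 1)] at hx
    have hx1 : x ∈ Icc (0:ℝ) 1 := ⟨le_trans (by norm_num) hx.1, hx.2⟩
    apply intervalIntegral.integral_congr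
    intro y hy
    rw [Set.uIcc_of_le (by norm_num : (1/2:ℝ) ≤ 1)] at hy
    have hy1 : y ∈ Icc (0:ℝ) 1 := ⟨le_trans (by norm_num) hy.1, hy.2⟩
    exact (hG_eq x hx1 y hy1).symm
  have hAB : (∫ x in (0:ℝ)..(1/2), F₀ x) = ∫ x in (1/2:ℝ)..1, F₁ x := by
    have h := heq (1/2) (by norm_num) (1/2) (by norm_num)
    rw [hA, hB] at h
    norm_num at h
    linarith
  -- bounds on the iterated integrals
  have hA_le : (∫ x in (0:ℝ)..(1/2), F₀ x) ≤ c / 4 := by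
    have : (∫ x in (0:ℝ)..(1/2), F₀ x) ≤ ∫ _ in (0:ℝ)..(1/2), c / 2 := by
      apply intervalIntegral.integral_mono_on (by norm_num)
        (hF₀_cont.intervalIntegrable _ _) (intervalIntegrable_const)
      exact hF₀_le
    refine this.trans_eq ?_
    simp; ring
  have hB_ge : c / 4 ≤ ∫ x in (1/2:ℝ)..1, F₁ x := by
    have : (∫ _ in (1/2:ℝ)..1, c / 2) ≤ ∫ x in (1/2:ℝ)..1, F₁ x := by
      apply intervalIntegral.integral_mono_on (by norm_num) (intervalIntegrable_const)
        (hF₁_cont.intervalIntegrable _ _)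
      exact hF₁_ge
    refine le_trans (le_of_eq ?_) this
    simp; ring
  have hA_eq : (∫ x in (0:ℝ)..(1/2), F₀ x) = c / 4 := le_antisymm hA_le (hAB ▸ hB_ge)
  have hB_eq : (∫ x in (1/2:ℝ)..1, F₁ x) = c / 4 := hAB ▸ hA_eq
  -- F₀ = c/2 on [0,1/2]
  have hF₀_eq : ∀ x ∈ Icc (0:ℝ) (1/2), F₀ x = c / 2 := by
    have hz : ∫ x in (0:ℝ)..(1/2), (c / 2 - F₀ x) = 0 := by
      rw [intervalIntegral.integral_sub intervalIntegrable_const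
        (hF₀_cont.intervalIntegrable _ _), hA_eq]
      simp; ring
    have := zero_of_intervalIntegral_zero (f := fun x => c / 2 - F₀ x) (by norm_num : (0:ℝ) < 1/2)
      (continuous_const.sub hF₀_cont)
      (fun x hx => by linarith [hF₀_le x hx]) hz
    intro x hx
    have := this x hx
    linarith
  have hF₁_eq : ∀ x ∈ Icc (1/2:ℝ) 1, F₁ x = c / 2 := by
    have hz : ∫ x in (1/2:ℝ)..1, (F₁ x - c / 2) = 0 := by
      rw [intervalIntegral.integral_sub (hF₁_cont.intervalIntegrable _ _)
        intervalIntegrable_const, hB_eq]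
      simp; ring
    have := zero_of_intervalIntegral_zero (f := fun x => F₁ x - c / 2) (by norm_num : (1/2:ℝ) < 1)
      (hF₁_cont.sub continuous_const)
      (fun x hx => by linarith [hF₁_ge x hx]) hz
    intro x hx
    have := this x hx
    linarith
  -- g = c on [0,1/2]²
  have hlow : ∀ x ∈ Icc (0:ℝ) (1/2), ∀ y ∈ Icc (0:ℝ) (1/2), g x y = c := by
    intro x hx y hy
    have hx1 : x ∈ Icc (0:ℝ) 1 := ⟨hx.1, hx.2.trans (by norm_num)⟩
    have hz : ∫ y in (0:ℝ)..(1/2), (c - G x y) = 0 := by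
      rw [intervalIntegral.integral_sub intervalIntegrable_const
        ((hG_cont_slice x).intervalIntegrable _ _)]
      have : F₀ x = c / 2 := hF₀_eq x hx
      simp only [hF₀] at this
      rw [this]
      simp; ring
    have hnn : ∀ y ∈ Icc (0:ℝ) (1/2), 0 ≤ c - G x y := by
      intro y hy
      have hy1 : y ∈ Icc (0:ℝ) 1 := ⟨hy.1, hy.2.trans (by norm_num)⟩
      rw [hG_eq x hx1 y hy1]
      have := hg_mono x hx1 y hy1 _ half_mem _ half_mem hx.2 hy.2
      linarith
    have := zero_of_intervalIntegral_zero (f := fun y => c - G x y) (by norm_num : (0:ℝ) < 1/2)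
      (continuous_const.sub (hG_cont_slice x)) hnn hz y hy
    have hy1 : y ∈ Icc (0:ℝ) 1 := ⟨hy.1, hy.2.trans (by norm_num)⟩
    rw [hG_eq x hx1 y hy1] at this
    linarith
  -- g = c on [1/2,1]²
  have hhigh : ∀ x ∈ Icc (1/2:ℝ) 1, ∀ y ∈ Icc (1/2:ℝ) 1, g x y = c := by
    intro x hx y hy
    have hx1 : x ∈ Icc (0:ℝ) 1 := ⟨le_trans (by norm_num) hx.1, hx.2⟩
    have hz : ∫ y in (1/2:ℝ)..1, (G x y - c) = 0 := by
      rw [intervalIntegral.integral_sub ((hG_cont_slice x).intervalIntegrable _ _)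
        intervalIntegrable_const]
      have : F₁ x = c / 2 := hF₁_eq x hx
      simp only [hF₁] at this
      rw [this]
      simp; ring
    have hnn : ∀ y ∈ Icc (1/2:ℝ) 1, 0 ≤ G x y - c := by
      intro y hy
      have hy1 : y ∈ Icc (0:ℝ) 1 := ⟨le_trans (by norm_num) hy.1, hy.2⟩
      rw [hG_eq x hx1 y hy1]
      have := hg_mono _ half_mem _ half_mem x hx1 y hy1 hx.1 hy.1
      linarith
    have := zero_of_intervalIntegral_zero (f := fun y => G x y - c) (by norm_num : (1/2:ℝ) < 1)
      ((hG_cont_slice x).sub continuous_const) hnn hz y hy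
    have hy1 : y ∈ Icc (0:ℝ) 1 := ⟨le_trans (by norm_num) hy.1, hy.2⟩
    rw [hG_eq x hx1 y hy1] at this
    linarith
  -- squeeze
  have key : ∀ r₁ ∈ Icc (0:ℝ) 1, ∀ r₂ ∈ Icc (0:ℝ) 1, g r₁ r₂ = c := by
    intro r₁ hr₁ r₂ hr₂
    have hm₁ : min r₁ (1/2) ∈ Icc (0:ℝ) 1 := ⟨le_min hr₁.1 (by norm_num), (min_le_right _ _).trans (by norm_num)⟩
    have hm₂ : min r₂ (1/2) ∈ Icc (0:ℝ) 1 := ⟨le_min hr₂.1 (by norm_num), (min_le_right _ _).trans (by norm_num)⟩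
    have hM₁ : max r₁ (1/2) ∈ Icc (0:ℝ) 1 := ⟨le_trans (by norm_num) (le_max_right _ _), max_le hr₁.2 (by norm_num)⟩
    have hM₂ : max r₂ (1/2) ∈ Icc (0:ℝ) 1 := ⟨le_trans (by norm_num) (le_max_right _ _), max_le hr₂.2 (by norm_num)⟩
    have h1 : g (min r₁ (1/2)) (min r₂ (1/2)) = c :=
      hlow _ ⟨hm₁.1, min_le_right _ _⟩ _ ⟨hm₂.1, min_le_right _ _⟩
    have h2 : g (max r₁ (1/2)) (max r₂ (1/2)) = c :=
      hhigh _ ⟨le_max_right _ _, hM₁.2⟩ _ ⟨le_max_right _ _, hM₂.2⟩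
    have hle1 : g (min r₁ (1/2)) (min r₂ (1/2)) ≤ g r₁ r₂ :=
      hg_mono _ hm₁ _ hm₂ _ hr₁ _ hr₂ (min_le_left _ _) (min_le_left _ _)
    have hle2 : g r₁ r₂ ≤ g (max r₁ (1/2)) (max r₂ (1/2)) :=
      hg_mono _ hr₁ _ hr₂ _ hM₁ _ hM₂ (le_max_left _ _) (le_max_left _ _)
    linarith [h1 ▸ hle1, h2 ▸ hle2]
  intro p₁ hp₁ p₂ hp₂ q₁ hq₁ q₂ hq₂
  rw [key p₁ hp₁ p₂ hp₂, key q₁ hq₁ q₂ hq₂]
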